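/- arXiv:1301.0526 — 4 statements merged into one kernel-verified Lean document; each statement's English description precedes it below -/
import Mathlib

section
/- Let α, β ∈ ℂ with α ∉ ℤ or β ∉ {0, 1}. Then the intermediate series module V_{α,β} with basis {v_n : n ∈ ℤ} and action d_m v_n = (α + n + mβ) v_{m+n}, C v_n = 0, is a simple module over the Virasoro algebra: its only submodules are 0 and V_{α,β}. -/
/-- If `α ∉ ℤ` or `β ∉ {0, 1}`, the intermediate series module
`V_{α,β}` (modelled on `ℤ →₀ ℂ` with `v_n = single n 1` and action
`d_m v_n = (α + n + mβ) v_{m+n}`, `C` acting by `0`) is a simple Virasoro module: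
any subspace invariant under all the operators `d_m` is `0` or everything. -/
theorem stmt_2 (α β : ℂ) (hαβ : (∀ m : ℤ, α ≠ (m : ℂ)) ∨ (β ≠ 0 ∧ β ≠ 1))
    (d : ℤ → (ℤ →₀ ℂ) →ₗ[ℂ] (ℤ →₀ ℂ))
    (hd : ∀ m n : ℤ, d m (Finsupp.single n 1) =
      (α + (n : ℂ) + (m : ℂ) * β) • Finsupp.single (m + n) (1 : ℂ)) :
    ∀ W : Submodule ℂ (ℤ →₀ ℂ), (∀ m : ℤ, ∀ w ∈ W, d m w ∈ W) → W = ⊥ ∨ W = ⊤ := by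
  intro W hW
  -- d 0 acts diagonally
  have hd0 : ∀ (w : ℤ →₀ ℂ) (n' : ℤ), d 0 w n' = (α + n') * w n' := by
    intro w
    induction w using Finsupp.induction_linear with
    | zero => simp
    | add f g hf hg =>
      intro n'
      simp only [map_add, Finsupp.add_apply, hf, hg]
      ring
    | single a b =>
      intro n'
      have h1 : (Finsupp.single a b : ℤ →₀ ℂ) = b • Finsupp.single a 1 := by
        rw [Finsupp.smul_single', mul_one]
      rw [h1, map_smul, hd 0 a]
      simp only [Finsupp.smul_apply, smul_eq_mul, Finsupp.single_apply, zero_add,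
        Int.cast_zero, zero_mul, add_zero]
      rcases eq_or_ne a n' with rfl | hne
      · split_ifs with h
        · ring
        · exact absurd rfl h
      · split_ifs with h
        · subst h; ring
        · ring
  -- from one nonzero element, extract a basis vector
  have main : ∀ N : ℕ, ∀ w ∈ W, w.support.card ≤ N → ∀ n : ℤ, w n ≠ 0 →
      Finsupp.single n (1 : ℂ) ∈ W := by
    intro N
    induction N with
    | zero =>
      intro w hw hcard n hn
      have : n ∈ w.support := Finsupp.mem_support_iff.mpr hn
      have : w.support.card ≠ 0 := Finset.card_ne_zero_of_mem this
      omega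
    | succ N ih =>
      intro w hw hcard n hn
      by_cases h : ∃ k ∈ w.support, k ≠ n
      · obtain ⟨k, hk, hkn⟩ := h
        set w' : ℤ →₀ ℂ := d 0 w - (α + k) • w with hw'def
        have hw' : w' ∈ W := Submodule.sub_mem W (hW 0 w hw) (Submodule.smul_mem W _ hw)
        have hval : ∀ j : ℤ, w' j = ((j : ℂ) - k) * w j := by
          intro j
          simp only [hw'def, Finsupp.sub_apply, Finsupp.smul_apply, hd0, smul_eq_mul]
          ring
        have hw'n : w' n ≠ 0 := by
          rw [hval]
          apply mul_ne_zero _ hn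
          rw [sub_ne_zero]
          exact_mod_cast hkn.symm
        have hsupp : w'.support ⊆ w.support.erase k := by
          intro j hj
          rw [Finsupp.mem_support_iff, hval] at hj
          rcases eq_or_ne j k with rfl | hjk
          · simp at hj
          · exact Finset.mem_erase.mpr ⟨hjk, Finsupp.mem_support_iff.mpr fun h0 => hj (by simp [h0])⟩
        have hcard' : w'.support.card ≤ N := by
          have h1 := Finset.card_le_card hsupp
          have h2 := Finset.card_erase_of_mem hk
          omega
        exact ih w' hw' hcard' n hw'n
      · push_neg at h
        obtain ⟨c, hc0, hweq⟩ : ∃ c : ℂ, c ≠ 0 ∧ w = Finsupp.single n c := by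
          refine ⟨w n, hn, ?_⟩
          ext j
          rcases eq_or_ne j n with rfl | hjn
          · rw [Finsupp.single_apply, if_pos rfl]
          · have hz : w j = 0 := by
              by_contra h0
              exact hjn (h j (Finsupp.mem_support_iff.mpr h0))
            rw [Finsupp.single_apply, if_neg (Ne.symm hjn)]
            exact hz
        rw [hweq] at hw
        have hmem := Submodule.smul_mem W c⁻¹ hw
        rw [Finsupp.smul_single', inv_mul_cancel₀ hc0] at hmem
        exact hmem
  -- propagation: one basis vector gives all
  have prop : ∀ n : ℤ, Finsupp.single n (1 : ℂ) ∈ W → ∀ k : ℤ,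
      Finsupp.single k (1 : ℂ) ∈ W := by
    intro n hn k
    -- at most one j kills the first coefficient
    have hA : ∀ j j' : ℤ, α + n + ((j : ℂ) - n) * β = 0 →
        α + n + ((j' : ℂ) - n) * β = 0 → j = j' := by
      intro j j' h h'
      by_cases hβ : β = 0
      · exfalso
        subst hβ
        simp only [mul_zero, add_zero] at h
        have hα : α = ((-n : ℤ) : ℂ) := by push_cast; linear_combination h
        rcases hαβ with hl | hr
        · exact hl (-n) hα
        · exact hr.1 rfl
      · have : ((j : ℂ) - j') * β = 0 := by linear_combination h - h'
        have := (mul_eq_zero.mp this).resolve_right hβ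
        have : (j : ℂ) = j' := sub_eq_zero.mp this
        exact_mod_cast this
    have hB : ∀ j j' : ℤ, α + j + ((k : ℂ) - j) * β = 0 →
        α + j' + ((k : ℂ) - j') * β = 0 → j = j' := by
      intro j j' h h'
      by_cases hβ : β = 1
      · exfalso
        subst hβ
        have hα : α = ((-k : ℤ) : ℂ) := by push_cast; linear_combination h
        rcases hαβ with hl | hr
        · exact hl (-k) hα
        · exact hr.2 rfl
      · have h1 : ((j : ℂ) - j') * (1 - β) = 0 := by linear_combination h - h'
        have hβ' : (1 : ℂ) - β ≠ 0 := fun h0 => hβ (by linear_combination -h0)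
        have := (mul_eq_zero.mp h1).resolve_right hβ'
        have : (j : ℂ) = j' := sub_eq_zero.mp this
        exact_mod_cast this
    obtain ⟨j, hc1, hc2⟩ : ∃ j : ℤ, α + n + ((j : ℂ) - n) * β ≠ 0 ∧
        α + (j : ℂ) + ((k : ℂ) - j) * β ≠ 0 := by
      by_contra hcon
      push_neg at hcon
      have hchoice : ∀ j : ℤ, α + n + ((j : ℂ) - n) * β = 0 ∨
          α + (j : ℂ) + ((k : ℂ) - j) * β = 0 := by
        intro j
        by_cases h1 : α + n + ((j : ℂ) - n) * β = 0
        · exact Or.inl h1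
        · exact Or.inr (hcon j h1)
      rcases hchoice 0 with h0 | h0 <;> rcases hchoice 1 with h1 | h1 <;>
        rcases hchoice 2 with h2 | h2
      · exact absurd (hA 0 1 h0 h1) (by decide)
      · exact absurd (hA 0 1 h0 h1) (by decide)
      · exact absurd (hA 0 2 h0 h2) (by decide)
      · exact absurd (hB 1 2 h1 h2) (by decide)
      · exact absurd (hA 1 2 h1 h2) (by decide)
      · exact absurd (hB 0 2 h0 h2) (by decide)
      · exact absurd (hB 0 1 h0 h1) (by decide)
      · exact absurd (hB 0 1 h0 h1) (by decide)
    -- step from n to j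
    have step1 : Finsupp.single j (1 : ℂ) ∈ W := by
      have hmem := hW (j - n) _ hn
      rw [hd (j - n) n] at hmem
      have heq : j - n + n = j := by ring
      rw [heq] at hmem
      have hc : (α + (n : ℂ) + ((j - n : ℤ) : ℂ) * β) ≠ 0 := by
        push_cast
        convert hc1 using 2
      have : Finsupp.single j (1 : ℂ) =
          (α + (n : ℂ) + ((j - n : ℤ) : ℂ) * β)⁻¹ •
            ((α + (n : ℂ) + ((j - n : ℤ) : ℂ) * β) • Finsupp.single j (1 : ℂ)) := by
        rw [smul_smul, inv_mul_cancel₀ hc, one_smul]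
      rw [this]
      exact Submodule.smul_mem W _ hmem
    -- step from j to k
    have hmem := hW (k - j) _ step1
    rw [hd (k - j) j] at hmem
    have heq : k - j + j = k := by ring
    rw [heq] at hmem
    have hc : (α + (j : ℂ) + ((k - j : ℤ) : ℂ) * β) ≠ 0 := by
      push_cast
      convert hc2 using 2
    have : Finsupp.single k (1 : ℂ) =
        (α + (j : ℂ) + ((k - j : ℤ) : ℂ) * β)⁻¹ •
          ((α + (j : ℂ) + ((k - j : ℤ) : ℂ) * β) • Finsupp.single k (1 : ℂ)) := by
      rw [smul_smul, inv_mul_cancel₀ hc, one_smul]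
    rw [this]
    exact Submodule.smul_mem W _ hmem
  -- conclusion
  rcases eq_or_ne W ⊥ with hbot | hbot
  · exact Or.inl hbot
  · right
    obtain ⟨w, hw, hw0⟩ := Submodule.exists_mem_ne_zero_of_ne_bot hbot
    obtain ⟨n, hn⟩ : ∃ n : ℤ, w n ≠ 0 := by
      by_contra h
      push_neg at h
      exact hw0 (Finsupp.ext h)
    have hsingle := main w.support.card w hw le_rfl n hn
    have hall := prop n hsingle
    rw [eq_top_iff]
    intro v _
    have hrep : v = v.sum fun a c => c • Finsupp.single a (1 : ℂ) := by
      conv_lhs => rw [← Finsupp.sum_single v]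
      apply Finsupp.sum_congr
      intro a _
      rw [Finsupp.smul_single', mul_one]
    rw [hrep]
    exact Submodule.sum_mem W fun a _ => Submodule.smul_mem W _ (hall a)
end

section
/- Let α, β, c ∈ ℂ, let V be a highest weight module over the Virasoro algebra with highest weight vector u of highest weight (c, h), and write homogeneous elements P of U(Vir_−) with d_0-degree deg(P) ∈ ℤ_{≤0}. Then the formulas d_k · (Pu ⊗ t^n) = ((d_k + α + n − deg(P) + kβ) P u) ⊗ t^{n+k} (for k, n ∈ ℤ and P ∈ U(Vir_−) homogeneous) and C acting by the scalar c define a Virasoro module structure on L = V ⊗ ℂ[t, t^{−1}], and the linear map V ⊗ V_{α,β} → L sending Pu ⊗ v_n to Pu ⊗ t^{n + deg(P)} is an isomorphism of Virasoro modules. -/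
open TensorProduct

private lemma aux_ext4 {V M : Type*} [AddCommGroup V] [Module ℂ V] [AddCommMonoid M] [Module ℂ M]
    (W : ℤ → Submodule ℂ V) (hsup : ⨆ m, W m = ⊤) {f g : V →ₗ[ℂ] M}
    (hfg : ∀ m : ℤ, ∀ x ∈ W m, f x = g x) : f = g := by
  have h1 : ⨆ m, W m ≤ LinearMap.eqLocus f g :=
    iSup_le fun m x hx => LinearMap.mem_eqLocus.mpr (hfg m x hx)
  rw [hsup] at h1
  ext x
  exact LinearMap.mem_eqLocus.mp (h1 Submodule.mem_top)

/-- Let `V` be a highest weight module over the Virasoro algebra with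
highest weight vector `u` of highest weight `(c, h)`, with Virasoro action `d` and
weight-grading `W` (so `W m` is the space of homogeneous vectors of degree `m ≤ 0`,
i.e. vectors `Pu` with `P ∈ U(Vir₋)` homogeneous of degree `m`).  Model
`L = V ⊗ ℂ[t, t⁻¹]` as `ℤ →₀ V` (with `x ⊗ tⁿ = single n x`).  Then:
(1) the formulas `d_k (Pu ⊗ tⁿ) = ((d_k + α + n − deg P + kβ) Pu) ⊗ t^{n+k}` and `C`
acting by the scalar `c` define a Virasoro module structure on `L` (the operators `D`
satisfy the Virasoro bracket with central charge `c`); and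
(2) the linear map `Φ : V ⊗ V_{α,β} → L`, `Pu ⊗ v_n ↦ Pu ⊗ t^{n + deg P}`, is an
isomorphism of Virasoro modules, where `V_{α,β}` is `ℤ →₀ ℂ` with basis
`v_n = single n 1`, action `dab`, and the Virasoro action on the tensor product is
`d_k ⊗ 1 + 1 ⊗ dab k`. -/
theorem stmt_4 (α β c h : ℂ) (V : Type*) [AddCommGroup V] [Module ℂ V]
    (d : ℤ → V →ₗ[ℂ] V) (u : V)
    -- Virasoro bracket on V, with the central element acting by the scalar c :
    (hbr : ∀ j k : ℤ, ∀ x : V, d j (d k x) - d k (d j x)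
      = ((k : ℂ) - (j : ℂ)) • d (j + k) x
        + (if k = -j then ((j : ℂ) ^ 3 - (j : ℂ)) / 12 * c else 0) • x)
    -- the weight grading of the highest weight module V :
    (W : ℤ → Submodule ℂ V) (hW : DirectSum.IsInternal W)
    (hWpos : ∀ m : ℤ, 0 < m → W m = ⊥)
    (hWd : ∀ k m : ℤ, ∀ x ∈ W m, d k x ∈ W (m + k))
    (hW0 : ∀ m : ℤ, ∀ x ∈ W m, d 0 x = (h + (m : ℂ)) • x)
    -- u is a highest weight vector of weight (c,h) generating V :
    (hu : u ∈ W 0) (hhw : ∀ k : ℤ, 0 < k → d k u = 0)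
    (hgen : ∀ W' : Submodule ℂ V, u ∈ W' → (∀ k : ℤ, ∀ x ∈ W', d k x ∈ W') → W' = ⊤)
    -- the intermediate series action on V_{α,β} = ℤ →₀ ℂ :
    (dab : ℤ → (ℤ →₀ ℂ) →ₗ[ℂ] (ℤ →₀ ℂ))
    (hdab : ∀ m n : ℤ, dab m (Finsupp.single n 1) =
      (α + (n : ℂ) + (m : ℂ) * β) • Finsupp.single (m + n) (1 : ℂ))
    -- the operators D on L = V ⊗ ℂ[t,t⁻¹] given by the formula of the statement :
    (D : ℤ → (ℤ →₀ V) →ₗ[ℂ] (ℤ →₀ V))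
    (hD : ∀ k m n : ℤ, ∀ x ∈ W m, D k (Finsupp.single n x)
      = Finsupp.single (n + k) (d k x + (α + (n : ℂ) - (m : ℂ) + (k : ℂ) * β) • x))
    -- the linear map Φ : V ⊗ V_{α,β} → L, Pu ⊗ v_n ↦ Pu ⊗ t^{n + deg P} :
    (Φ : TensorProduct ℂ V (ℤ →₀ ℂ) →ₗ[ℂ] (ℤ →₀ V))
    (hΦ : ∀ m n : ℤ, ∀ x ∈ W m,
      Φ (x ⊗ₜ[ℂ] Finsupp.single n 1) = Finsupp.single (n + m) x) :
    -- (1) D is a Virasoro module structure on L with central charge c :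
    (∀ j k : ℤ, ∀ y : ℤ →₀ V, D j (D k y) - D k (D j y)
      = ((k : ℂ) - (j : ℂ)) • D (j + k) y
        + (if k = -j then ((j : ℂ) ^ 3 - (j : ℂ)) / 12 * c else 0) • y)
    -- (2) Φ is an isomorphism of Virasoro modules :
    ∧ Function.Bijective Φ
    ∧ (∀ k : ℤ, ∀ y : TensorProduct ℂ V (ℤ →₀ ℂ),
        Φ ((TensorProduct.map (d k) (LinearMap.id : (ℤ →₀ ℂ) →ₗ[ℂ] (ℤ →₀ ℂ))
            + TensorProduct.map (LinearMap.id : V →ₗ[ℂ] V) (dab k)) y) = D k (Φ y)) := by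
  classical
  have hsup : ⨆ m, W m = ⊤ := hW.submodule_iSup_eq_top
  -- Part 1
  have part1 : ∀ j k : ℤ, ∀ y : ℤ →₀ V, D j (D k y) - D k (D j y)
      = ((k : ℂ) - (j : ℂ)) • D (j + k) y
        + (if k = -j then ((j : ℂ) ^ 3 - (j : ℂ)) / 12 * c else 0) • y := by
    intro j k
    have key : (D j) ∘ₗ (D k) - (D k) ∘ₗ (D j)
        = ((k : ℂ) - (j : ℂ)) • D (j + k)
          + (if k = -j then ((j : ℂ) ^ 3 - (j : ℂ)) / 12 * c else 0) • LinearMap.id := by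
      apply Finsupp.lhom_ext'
      intro n
      apply aux_ext4 W hsup
      intro m x hx
      have hdk : d k x ∈ W (m + k) := hWd k m x hx
      have hdj : d j x ∈ W (m + j) := hWd j m x hx
      simp only [LinearMap.comp_apply, Finsupp.lsingle_apply, LinearMap.sub_apply,
        LinearMap.add_apply, LinearMap.smul_apply, LinearMap.id_apply]
      rw [hD k m n x hx, hD j m n x hx,
        Finsupp.single_add, Finsupp.single_add,
        ← Finsupp.smul_single, ← Finsupp.smul_single,
        map_add, map_add, map_smul, map_smul,
        hD j (m+k) (n+k) _ hdk, hD j m (n+k) x hx,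
        hD k (m+j) (n+j) _ hdj, hD k m (n+j) x hx,
        hD (j+k) m n x hx]
      have i1 : n + k + j = n + (j + k) := by ring
      have i2 : n + j + k = n + (j + k) := by ring
      rw [i1, i2]
      have hb := sub_eq_iff_eq_add.mp (hbr j k x)
      by_cases hkj : k = -j
      · rw [if_pos hkj] at hb ⊢
        have i3 : n + (j + k) = n := by rw [hkj]; ring
        rw [i3]
        simp only [Finsupp.smul_single, ← Finsupp.single_add, ← Finsupp.single_sub]
        congr 1
        rw [hb]
        match_scalars <;> push_cast <;> ring
      · rw [if_neg hkj] at hb ⊢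
        simp only [zero_smul, add_zero] at hb ⊢
        simp only [Finsupp.smul_single, ← Finsupp.single_add, ← Finsupp.single_sub]
        congr 1
        rw [hb]
        match_scalars <;> push_cast <;> ring
    intro y
    simpa only [LinearMap.sub_apply, LinearMap.comp_apply, LinearMap.add_apply,
      LinearMap.smul_apply, LinearMap.id_apply] using LinearMap.ext_iff.mp key y
  -- the inverse of Φ
  set e : (DirectSum ℤ (fun m => ↥(W m))) ≃ₗ[ℂ] V := LinearEquiv.ofBijective (DirectSum.coeLinearMap W) hW with he
  set T : ℤ → (DirectSum ℤ (fun m => ↥(W m))) →ₗ[ℂ] TensorProduct ℂ V (ℤ →₀ ℂ) :=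
    fun n => DirectSum.toModule ℂ ℤ _ (fun m =>
      ((TensorProduct.mk ℂ V (ℤ →₀ ℂ)).flip (Finsupp.single (n - m) 1)).comp (W m).subtype)
    with hT
  set Ψ : (ℤ →₀ V) →ₗ[ℂ] TensorProduct ℂ V (ℤ →₀ ℂ) :=
    Finsupp.lsum ℂ (fun n => (T n).comp e.symm.toLinearMap) with hΨdef
  have hΨ : ∀ m n : ℤ, ∀ x, ∀ hx : x ∈ W m,
      Ψ (Finsupp.single n x) = x ⊗ₜ[ℂ] Finsupp.single (n - m) 1 := by
    intro m n x hx
    have h1 : e.symm x = DirectSum.lof ℂ ℤ (fun m => W m) m ⟨x, hx⟩ := by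
      rw [LinearEquiv.symm_apply_eq, he]
      symm
      change DirectSum.coeLinearMap W (DirectSum.lof ℂ ℤ (fun m => W m) m ⟨x, hx⟩) = x
      rw [DirectSum.lof_eq_of, DirectSum.coeLinearMap_of]
    rw [hΨdef, Finsupp.lsum_single, LinearMap.comp_apply, LinearEquiv.coe_coe, h1, hT]
    rw [DirectSum.toModule_lof]
    rfl
  have hΨΦ : Ψ ∘ₗ Φ = LinearMap.id := by
    apply TensorProduct.ext
    refine aux_ext4 (M := (ℤ →₀ ℂ) →ₗ[ℂ] (V ⊗[ℂ] (ℤ →₀ ℂ))) W hsup fun m x hx => ?_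
    apply Finsupp.lhom_ext
    intro n a
    have ha : Finsupp.single n a = a • Finsupp.single n (1 : ℂ) := by
      rw [Finsupp.smul_single, smul_eq_mul, mul_one]
    simp only [LinearMap.compr₂_apply, LinearMap.compr₂ₛₗ_apply, TensorProduct.mk_apply, LinearMap.comp_apply,
      LinearMap.id_apply, ha, TensorProduct.tmul_smul, map_smul]
    rw [hΦ m n x hx, hΨ m (n + m) x hx]
    congr 2
    ring
  have hΦΨ : Φ ∘ₗ Ψ = LinearMap.id := by
    apply Finsupp.lhom_ext'
    intro n
    apply aux_ext4 W hsup
    intro m x hx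
    simp only [LinearMap.comp_apply, Finsupp.lsingle_apply, LinearMap.id_apply]
    rw [hΨ m n x hx, hΦ m (n - m) x hx]
    congr 1
    ring
  have hbij : Function.Bijective Φ := by
    constructor
    · exact Function.LeftInverse.injective (g := Ψ) fun z => by
        simpa using LinearMap.ext_iff.mp hΨΦ z
    · exact Function.RightInverse.surjective (g := Ψ) fun z => by
        simpa using LinearMap.ext_iff.mp hΦΨ z
  refine ⟨part1, hbij, ?_⟩
  -- Part 3
  intro k
  have key : Φ ∘ₗ (TensorProduct.map (d k) (LinearMap.id : (ℤ →₀ ℂ) →ₗ[ℂ] (ℤ →₀ ℂ))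
        + TensorProduct.map (LinearMap.id : V →ₗ[ℂ] V) (dab k)) = (D k) ∘ₗ Φ := by
    apply TensorProduct.ext
    refine aux_ext4 (M := (ℤ →₀ ℂ) →ₗ[ℂ] (ℤ →₀ V)) W hsup fun m x hx => ?_
    apply Finsupp.lhom_ext
    intro n a
    have ha : Finsupp.single n a = a • Finsupp.single n (1 : ℂ) := by
      rw [Finsupp.smul_single, smul_eq_mul, mul_one]
    simp only [LinearMap.compr₂_apply, LinearMap.compr₂ₛₗ_apply, TensorProduct.mk_apply, LinearMap.comp_apply,
      ha, TensorProduct.tmul_smul, map_smul]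
    congr 1
    simp only [LinearMap.add_apply, TensorProduct.map_tmul, LinearMap.id_apply, map_add]
    rw [hdab k n, TensorProduct.tmul_smul, map_smul,
      hΦ (m + k) n (d k x) (hWd k m x hx), hΦ m (k + n) x hx, hΦ m n x hx,
      hD k m (n + m) x hx]
    have i1 : n + (m + k) = n + m + k := by ring
    have i2 : k + n + m = n + m + k := by ring
    rw [i1, i2]
    simp only [Finsupp.smul_single, ← Finsupp.single_add]
    congr 1
    match_scalars <;> push_cast <;> ring
  intro y
  simpa using LinearMap.ext_iff.mp key y
end

section
/- Fix α, β ∈ ℂ and n ∈ ℤ. Let T(Vir_−) be the free associative ℂ-algebra (tensor algebra) on generators {d_{−k} : k ≥ 1}, graded by deg(d_{−k}) = −k. Define a linear map φ_n : T(Vir_−) → ℂ inductively by φ_n(1) = 1 and φ_n(d_{−k} P) = −(α + n + k − deg(P) − kβ) φ_n(P) for homogeneous P. Then for all i, j ≥ 1 and every homogeneous P ∈ T(Vir_−), φ_n((d_{−i} d_{−j} − d_{−j} d_{−i} − (i − j) d_{−i−j}) P) = 0. Consequently φ_n factors through the universal enveloping algebra U(Vir_−) = T(Vir_−)/J, where J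 is the two-sided ideal generated by the elements d_{−i} d_{−j} − d_{−j} d_{−i} − (i − j) d_{−i−j}. -/
/-! STATEMENT 5: the linear map `φ_n` on the tensor algebra `T(Vir₋)` (the free
associative algebra on generators `d_{-k}`, `k ≥ 1`, modelled as the monoid algebra
of the free monoid on `ℕ+`, whose basis consists of the words in the `d_{-k}`),
defined by `φ_n(1) = 1`, `φ_n(d_{-k} P) = -(α + n + k - deg P - kβ) φ_n(P)`,
kills `(d_{-i} d_{-j} - d_{-j} d_{-i} - (i-j) d_{-i-j}) P` for all words `P`, and
consequently vanishes on the two-sided ideal `J` generated by these relators, hence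
factors through `U(Vir₋) = T(Vir₋)/J`. -/

/-- the degree `deg` on words: `deg(d_{-k}) = -k`; `sumL P = -deg P`. -/
def sumL (P : List ℕ+) : ℕ := (P.map fun j => (j : ℕ)).sum

/-- `φ_n` on the basis of words: `φ_n(1) = 1` and
`φ_n(d_{-k} P) = -(α + n + k - deg P - kβ) φ_n(P)`. -/
noncomputable def phiW (α β : ℂ) (n : ℤ) : List ℕ+ → ℂ
  | [] => 1
  | k :: P => -(α + (n : ℂ) + ((k : ℕ) : ℂ) + ((sumL P : ℕ) : ℂ) - ((k : ℕ) : ℂ) * β)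
      * phiW α β n P

/-- `φ_n` as a linear map on the tensor algebra `T(Vir₋)`, i.e. the linear extension
of `phiW` to the monoid algebra of the free monoid on `ℕ+`. -/
noncomputable def phiT (α β : ℂ) (n : ℤ) :
    MonoidAlgebra ℂ (FreeMonoid ℕ+) →ₗ[ℂ] ℂ :=
  Finsupp.linearCombination ℂ (fun w : FreeMonoid ℕ+ => phiW α β n (FreeMonoid.toList w))
    ∘ₗ (MonoidAlgebra.coeffLinearEquiv ℂ :
      MonoidAlgebra ℂ (FreeMonoid ℕ+) ≃ₗ[ℂ] (FreeMonoid ℕ+ →₀ ℂ)).toLinearMap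

/-- the relator `d_{-i} d_{-j} - d_{-j} d_{-i} - (i - j) d_{-i-j}` in `T(Vir₋)`. -/
noncomputable def relator (i j : ℕ+) : MonoidAlgebra ℂ (FreeMonoid ℕ+) :=
  MonoidAlgebra.single (FreeMonoid.of i * FreeMonoid.of j) 1
    - MonoidAlgebra.single (FreeMonoid.of j * FreeMonoid.of i) 1
    - (((i : ℕ) : ℂ) - ((j : ℕ) : ℂ)) • MonoidAlgebra.single (FreeMonoid.of (i + j)) 1

lemma sumL_cons (k : ℕ+) (P : List ℕ+) : sumL (k :: P) = k + sumL P := by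
  simp [sumL]

lemma sumL_append (w v : List ℕ+) : sumL (w ++ v) = sumL w + sumL v := by
  simp [sumL]

/-- the core computation: `φ_n(w (dᵢdⱼ - dⱼdᵢ - (i-j)d_{i+j}) P) = 0` on words. -/
lemma keyA (α β : ℂ) (n : ℤ) : ∀ (w : List ℕ+) (i j : ℕ+) (P : List ℕ+),
    phiW α β n (w ++ i :: j :: P) - phiW α β n (w ++ j :: i :: P)
      - (((i : ℕ) : ℂ) - ((j : ℕ) : ℂ)) * phiW α β n (w ++ (i + j) :: P) = 0 := by
  intro w
  induction w with
  | nil =>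
    intro i j P
    simp only [List.nil_append, phiW, sumL_cons, PNat.add_coe]
    push_cast
    ring
  | cons k w ih =>
    intro i j P
    have h1 : sumL (w ++ j :: i :: P) = sumL (w ++ i :: j :: P) := by
      simp [sumL_append, sumL_cons]; ring
    have h2 : sumL (w ++ (i + j) :: P) = sumL (w ++ i :: j :: P) := by
      simp [sumL_append, sumL_cons, PNat.add_coe]; ring
    simp only [List.cons_append, phiW, List.append_eq, h1, h2]
    linear_combination
      (-(α + (n : ℂ) + ((k : ℕ) : ℂ) + ((sumL (w ++ i :: j :: P) : ℕ) : ℂ)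
        - ((k : ℕ) : ℂ) * β)) * ih i j P

lemma phiT_single (α β : ℂ) (n : ℤ) (w : FreeMonoid ℕ+) (c : ℂ) :
    phiT α β n (MonoidAlgebra.single w c) = c * phiW α β n (FreeMonoid.toList w) := by
  rw [phiT, LinearMap.comp_apply, LinearEquiv.coe_coe, MonoidAlgebra.coeffLinearEquiv_apply,
    MonoidAlgebra.coeff_single]
  erw [Finsupp.linearCombination_single]
  rw [smul_eq_mul]

lemma keyB (α β : ℂ) (n : ℤ) (a b : FreeMonoid ℕ+) (i j : ℕ+) :
    phiT α β n (MonoidAlgebra.single a 1 * relator i j * MonoidAlgebra.single b 1) = 0 := by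
  have h : MonoidAlgebra.single a (1 : ℂ) * relator i j * MonoidAlgebra.single b 1
      = MonoidAlgebra.single (a * (FreeMonoid.of i * FreeMonoid.of j) * b) 1
        - MonoidAlgebra.single (a * (FreeMonoid.of j * FreeMonoid.of i) * b) 1
        - (((i : ℕ) : ℂ) - ((j : ℕ) : ℂ)) •
            MonoidAlgebra.single (a * FreeMonoid.of (i + j) * b) 1 := by
    simp only [relator, mul_sub, sub_mul, smul_mul_assoc, mul_smul_comm,
      MonoidAlgebra.single_mul_single, one_mul, mul_one]
  rw [h, map_sub, map_sub, map_smul, phiT_single, phiT_single, phiT_single]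
  have := keyA α β n (FreeMonoid.toList a) i j (FreeMonoid.toList b)
  simp only [FreeMonoid.toList_mul, FreeMonoid.toList_of] at *
  simpa using this

lemma keyC (α β : ℂ) (n : ℤ) (a b : MonoidAlgebra ℂ (FreeMonoid ℕ+)) (i j : ℕ+) :
    phiT α β n (a * relator i j * b) = 0 := by
  induction a using MonoidAlgebra.induction_linear with
  | zero => simp
  | add f g hf hg => rw [add_mul, add_mul, map_add, hf, hg, add_zero]
  | single w c =>
    induction b using MonoidAlgebra.induction_linear with
    | zero => simp
    | add f g hf hg => rw [mul_add, map_add, hf, hg, add_zero]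
    | single v d =>
      have h : (MonoidAlgebra.single w c : MonoidAlgebra ℂ (FreeMonoid ℕ+)) * relator i j
          * MonoidAlgebra.single v d
          = (c * d) • (MonoidAlgebra.single w 1 * relator i j * MonoidAlgebra.single v 1) := by
        have hw : (MonoidAlgebra.single w c : MonoidAlgebra ℂ (FreeMonoid ℕ+))
            = c • MonoidAlgebra.single w 1 := by
          rw [MonoidAlgebra.smul_single', mul_one]
        have hv : (MonoidAlgebra.single v d : MonoidAlgebra ℂ (FreeMonoid ℕ+))
            = d • MonoidAlgebra.single v 1 := by
          rw [MonoidAlgebra.smul_single', mul_one]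
        rw [hw, hv, smul_mul_assoc, smul_mul_assoc, mul_smul_comm, smul_smul, mul_comm c d]
      rw [h, map_smul, keyB, smul_zero]

theorem stmt_5 (α β : ℂ) (n : ℤ) :
    -- `φ_n((d_{-i}d_{-j} - d_{-j}d_{-i} - (i-j)d_{-i-j}) P) = 0` for every word `P` :
    (∀ i j : ℕ+, ∀ P : FreeMonoid ℕ+,
      phiT α β n (relator i j * MonoidAlgebra.single P 1) = 0)
    -- consequently `φ_n` vanishes on the two-sided ideal `J` generated by the
    -- relators, hence factors through `U(Vir₋) = T(Vir₋)/J` :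
    ∧ (∀ x ∈ TwoSidedIdeal.span {r : MonoidAlgebra ℂ (FreeMonoid ℕ+) |
        ∃ i j : ℕ+, r = relator i j}, phiT α β n x = 0) := by
  constructor
  · intro i j P
    have := keyC α β n 1 (MonoidAlgebra.single P 1) i j
    rwa [one_mul] at this
  · intro x hx
    rw [TwoSidedIdeal.mem_span_iff_mem_addSubgroup_closure] at hx
    induction hx using AddSubgroup.closure_induction with
    | mem z hz =>
      obtain ⟨w, ⟨a, -, r, ⟨i, j, rfl⟩, rfl⟩, b, -, rfl⟩ := hz
      exact keyC α β n a b i j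
    | zero => simp
    | add f g _ _ hf hg => rw [map_add, hf, hg, add_zero]
    | neg f _ hf => rw [map_neg, hf, neg_zero]
end

section
/- Let α, β ∈ ℂ with 0 ≤ Re(α) < 1. Set n₁ = β − α − 1 + √(1 − β) and n₂ = β − α − 1 − √(1 − β) for some choice of square root. Then both n₁ and n₂ are integers if and only if either (α = 0 and β = 1 − k² for some k ∈ ℕ, k ≥ 1, in which case {n₁, n₂} = {−k² + k, −k² − k}), or (α = 1/4 and β = 1 − (l + 1/2)² for some l ∈ ℤ_{≥0}, in which case {n₁, n₂} = {−l², −(l+1)²}). -/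
/-- for `0 ≤ Re α < 1` (and `β ≠ 1`, the standing assumption of the
paper), with `s` a complex square root of `1 - β` and `n₁ = β - α - 1 + s`,
`n₂ = β - α - 1 - s`, both `n₁` and `n₂` are integers iff either `α = 0` and
`β = 1 - k²` for some `k ∈ ℕ`, `k ≥ 1`, with `{n₁, n₂} = {-k² + k, -k² - k}`, or
`α = 1/4` and `β = 1 - (l + 1/2)²` for some `l ∈ ℤ≥0`, with
`{n₁, n₂} = {-l², -(l+1)²}`. -/
theorem stmt_11 (α β : ℂ) (hre : 0 ≤ α.re ∧ α.re < 1) (hβ : β ≠ 1)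
    (s : ℂ) (hs : s ^ 2 = 1 - β) :
    ((∃ m : ℤ, β - α - 1 + s = (m : ℂ)) ∧ (∃ m : ℤ, β - α - 1 - s = (m : ℂ)))
    ↔ ((α = 0 ∧ ∃ k : ℕ, 1 ≤ k ∧ β = 1 - (k : ℂ) ^ 2 ∧
          ({β - α - 1 + s, β - α - 1 - s} : Set ℂ)
            = {-(k : ℂ) ^ 2 + (k : ℂ), -(k : ℂ) ^ 2 - (k : ℂ)})
      ∨ (α = 1 / 4 ∧ ∃ l : ℕ, β = 1 - ((l : ℂ) + 1 / 2) ^ 2 ∧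
          ({β - α - 1 + s, β - α - 1 - s} : Set ℂ)
            = {-(l : ℂ) ^ 2, -((l : ℂ) + 1) ^ 2})) := by
  constructor
  · rintro ⟨⟨m₁, h1⟩, ⟨m₂, h2⟩⟩
    have hd : (2 : ℂ) * s = (m₁ : ℂ) - m₂ := by linear_combination h1 - h2
    have hβ4 : (4 : ℂ) * β = 4 - ((m₁ : ℂ) - m₂) ^ 2 := by
      linear_combination 4 * hs - (2 * s + ((m₁ : ℂ) - m₂)) * hd
    have hα4 : (4 : ℂ) * α = -(((m₁ : ℂ) - m₂) ^ 2) - 2 * ((m₁ : ℂ) + m₂) := by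
      linear_combination hβ4 - 2 * (h1 + h2)
    rcases Int.even_or_odd (m₁ - m₂) with ⟨k', hk⟩ | ⟨k', hk⟩
    · -- even case: α = 0
      have hm1 : m₁ = m₂ + 2 * k' := by omega
      subst hm1
      push_cast at hα4 hβ4
      have hαE : (4 : ℂ) * α = ((-4 * k' ^ 2 - 4 * k' - 4 * m₂ : ℤ) : ℂ) := by
        push_cast
        linear_combination hα4
      have hEre : (4 : ℝ) * α.re = ((-4 * k' ^ 2 - 4 * k' - 4 * m₂ : ℤ) : ℝ) := by
        have h := congrArg Complex.re hαE
        simpa only [Complex.mul_re, Complex.re_ofNat, Complex.im_ofNat,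
          Complex.intCast_re, zero_mul, sub_zero] using h
      have hlow : (0 : ℤ) ≤ -4 * k' ^ 2 - 4 * k' - 4 * m₂ := by
        have : (0 : ℝ) ≤ ((-4 * k' ^ 2 - 4 * k' - 4 * m₂ : ℤ) : ℝ) := by
          rw [← hEre]; linarith [hre.1]
        exact_mod_cast this
      have hhigh : (-4 * k' ^ 2 - 4 * k' - 4 * m₂ : ℤ) < 4 := by
        have : ((-4 * k' ^ 2 - 4 * k' - 4 * m₂ : ℤ) : ℝ) < 4 := by
          rw [← hEre]; linarith [hre.2]
        exact_mod_cast this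
      have hm2 : m₂ = -k' ^ 2 - k' := by
        generalize k' ^ 2 = q at hlow hhigh ⊢
        omega
      subst hm2
      have hα0 : α = 0 := by
        have h := hαE
        push_cast at h
        linear_combination h / 4
      have hβval : β = 1 - (k' : ℂ) ^ 2 := by
        linear_combination hβ4 / 4
      have hk0 : k' ≠ 0 := by
        rintro rfl
        apply hβ
        rw [hβval]; norm_num
      refine Or.inl ⟨hα0, ?_⟩
      rcases le_or_gt 0 k' with hpos | hneg
      · obtain ⟨n, rfl⟩ := Int.eq_ofNat_of_zero_le hpos
        refine ⟨n, by omega, ?_, ?_⟩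
        · rw [hβval]; push_cast; ring
        · have e1 : β - α - 1 + s = -(n : ℂ) ^ 2 + n := by
            rw [h1]; push_cast; ring
          have e2 : β - α - 1 - s = -(n : ℂ) ^ 2 - n := by
            rw [h2]; push_cast; ring
          rw [e1, e2]
      · obtain ⟨n, hn⟩ := Int.eq_ofNat_of_zero_le (show (0:ℤ) ≤ -k' by omega)
        have hkn : k' = -(n : ℤ) := by omega
        subst hkn
        refine ⟨n, by omega, ?_, ?_⟩
        · rw [hβval]; push_cast; ring
        · have e1 : β - α - 1 + s = -(n : ℂ) ^ 2 - n := by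
            rw [h1]; push_cast; ring
          have e2 : β - α - 1 - s = -(n : ℂ) ^ 2 + n := by
            rw [h2]; push_cast; ring
          rw [e1, e2]
          exact Set.pair_comm _ _
    · -- odd case: α = 1/4
      have hm1 : m₁ = m₂ + 2 * k' + 1 := by omega
      subst hm1
      push_cast at hα4 hβ4
      have hαE : (4 : ℂ) * α = ((-4 * k' ^ 2 - 8 * k' - 4 * m₂ - 3 : ℤ) : ℂ) := by
        push_cast
        linear_combination hα4
      have hEre : (4 : ℝ) * α.re = ((-4 * k' ^ 2 - 8 * k' - 4 * m₂ - 3 : ℤ) : ℝ) := by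
        have h := congrArg Complex.re hαE
        simpa only [Complex.mul_re, Complex.re_ofNat, Complex.im_ofNat,
          Complex.intCast_re, zero_mul, sub_zero] using h
      have hlow : (0 : ℤ) ≤ -4 * k' ^ 2 - 8 * k' - 4 * m₂ - 3 := by
        have : (0 : ℝ) ≤ ((-4 * k' ^ 2 - 8 * k' - 4 * m₂ - 3 : ℤ) : ℝ) := by
          rw [← hEre]; linarith [hre.1]
        exact_mod_cast this
      have hhigh : (-4 * k' ^ 2 - 8 * k' - 4 * m₂ - 3 : ℤ) < 4 := by
        have : ((-4 * k' ^ 2 - 8 * k' - 4 * m₂ - 3 : ℤ) : ℝ) < 4 := by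
          rw [← hEre]; linarith [hre.2]
        exact_mod_cast this
      have hm2 : m₂ = -k' ^ 2 - 2 * k' - 1 := by
        generalize k' ^ 2 = q at hlow hhigh ⊢
        omega
      subst hm2
      have hα14 : α = 1 / 4 := by
        have h := hαE
        push_cast at h
        linear_combination h / 4
      have hβval : β = 1 - ((k' : ℂ) + 1 / 2) ^ 2 := by
        linear_combination hβ4 / 4
      refine Or.inr ⟨hα14, ?_⟩
      rcases le_or_gt 0 k' with hpos | hneg
      · obtain ⟨n, rfl⟩ := Int.eq_ofNat_of_zero_le hpos
        refine ⟨n, ?_, ?_⟩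
        · rw [hβval]; push_cast; ring
        · have e1 : β - α - 1 + s = -(n : ℂ) ^ 2 := by
            rw [h1]; push_cast; ring
          have e2 : β - α - 1 - s = -((n : ℂ) + 1) ^ 2 := by
            rw [h2]; push_cast; ring
          rw [e1, e2]
      · obtain ⟨n, hn⟩ := Int.eq_ofNat_of_zero_le (show (0:ℤ) ≤ -k' - 1 by omega)
        have hkn : k' = -(n : ℤ) - 1 := by omega
        subst hkn
        refine ⟨n, ?_, ?_⟩
        · rw [hβval]; push_cast; ring
        · have e1 : β - α - 1 + s = -((n : ℂ) + 1) ^ 2 := by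
            rw [h1]; push_cast; ring
          have e2 : β - α - 1 - s = -(n : ℂ) ^ 2 := by
            rw [h2]; push_cast; ring
          rw [e1, e2]
          exact Set.pair_comm _ _
  · rintro (⟨hα, k, hk1, hβk, hset⟩ | ⟨hα, l, hβl, hset⟩)
    · constructor
      · have hmem : β - α - 1 + s ∈ ({-(k : ℂ) ^ 2 + k, -(k : ℂ) ^ 2 - k} : Set ℂ) := by
          rw [← hset]; exact Set.mem_insert _ _
        simp only [Set.mem_insert_iff, Set.mem_singleton_iff] at hmem
        rcases hmem with h | h
        · exact ⟨-(k : ℤ) ^ 2 + k, by rw [h]; push_cast; ring⟩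
        · exact ⟨-(k : ℤ) ^ 2 - k, by rw [h]; push_cast; ring⟩
      · have hmem : β - α - 1 - s ∈ ({-(k : ℂ) ^ 2 + k, -(k : ℂ) ^ 2 - k} : Set ℂ) := by
          rw [← hset]; exact Set.mem_insert_of_mem _ rfl
        simp only [Set.mem_insert_iff, Set.mem_singleton_iff] at hmem
        rcases hmem with h | h
        · exact ⟨-(k : ℤ) ^ 2 + k, by rw [h]; push_cast; ring⟩
        · exact ⟨-(k : ℤ) ^ 2 - k, by rw [h]; push_cast; ring⟩
    · constructor
      · have hmem : β - α - 1 + s ∈ ({-(l : ℂ) ^ 2, -((l : ℂ) + 1) ^ 2} : Set ℂ) := by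
          rw [← hset]; exact Set.mem_insert _ _
        simp only [Set.mem_insert_iff, Set.mem_singleton_iff] at hmem
        rcases hmem with h | h
        · exact ⟨-(l : ℤ) ^ 2, by rw [h]; push_cast; ring⟩
        · exact ⟨-((l : ℤ) + 1) ^ 2, by rw [h]; push_cast; ring⟩
      · have hmem : β - α - 1 - s ∈ ({-(l : ℂ) ^ 2, -((l : ℂ) + 1) ^ 2} : Set ℂ) := by
          rw [← hset]; exact Set.mem_insert_of_mem _ rfl
        simp only [Set.mem_insert_iff, Set.mem_singleton_iff] at hmem
        rcases hmem with h | h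
        · exact ⟨-(l : ℤ) ^ 2, by rw [h]; push_cast; ring⟩
        · exact ⟨-((l : ℤ) + 1) ^ 2, by rw [h]; push_cast; ring⟩
end
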